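/- Let q, p ∈ ℂ with q ≠ 0 and p² = q, and let Q1, Q2, Q3 ∈ ℂ with Q1Q2 ≠ q^n for every integer n. Then for every f ∈ ℂ[[x]], H̃ f = 0 if and only if K̃ f = 0. -/

import Mathlib

/-- The substitution operator on `ℂ[[x]]` sending the `k`-th coefficient `c_k`
to `a^k c_k`; for `a = q⁻¹` this is the operator `S'`, `(S'f)(x) = f(q⁻¹x)`. -/
noncomputable def Sop (a : ℂ) : Module.End ℂ (PowerSeries ℂ) where
  toFun f := PowerSeries.rescale a f
  map_add' f g := map_add _ f g
  map_smul' c f := by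
    ext n
    simp [PowerSeries.coeff_rescale]
    ring

/-- Multiplication by `x` on `ℂ[[x]]`. -/
noncomputable def Mop : Module.End ℂ (PowerSeries ℂ) :=
  LinearMap.mulLeft ℂ (PowerSeries.X : PowerSeries ℂ)

/-- The operator `H̃(x, q^{x∂x})` of Section 5.2 of the paper, with
`S' = Sop q⁻¹` (the substitution `x ↦ q⁻¹x`). -/
noncomputable def Htop (q p Q1 Q2 Q3 : ℂ) : Module.End ℂ (PowerSeries ℂ) :=
  (1 - (Q1 * Q2 * q ^ 2) • Sop q⁻¹) * (1 - (Q1 * Q2 * q) • Sop q⁻¹)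
  + ((1 + Q1 * Q3) * p) • (Mop * (1 - (Q1 * Q2 * q) • Sop q⁻¹))
  + (Q1 * Q3 * q) • (Mop * Mop)
  - (1 - (Q1 * Q2 * q ^ 2) • Sop q⁻¹) * (1 - (Q1 * Q2 * q) • Sop q⁻¹) * Sop q⁻¹
  - (Q1 * (1 + Q2 * Q3) * p) • (Mop * (1 - (Q1 * Q2 * q) • Sop q⁻¹) * Sop q⁻¹)
  - (Q1 ^ 2 * Q2 * Q3 * q) • (Mop * Mop * Sop q⁻¹)

/-- The operator `K̃(x, q^{x∂x})` of Section 5.2 of the paper. -/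
noncomputable def Ktop (q p Q1 Q2 Q3 : ℂ) : Module.End ℂ (PowerSeries ℂ) :=
  (1 - (Q1 * Q2 * q) • Sop q⁻¹) * (1 - Sop q⁻¹)
  + ((1 + Q1 * Q3) * p) • Mop
  - (Q1 * (1 + Q2 * Q3) * p) • (Mop * Sop q⁻¹)
  + (Q1 * Q3 * q) • (Mop * Mop)

lemma Sop_apply (a : ℂ) (f : PowerSeries ℂ) : Sop a f = PowerSeries.rescale a f := rfl
lemma Mop_apply (f : PowerSeries ℂ) : Mop f = PowerSeries.X * f := rfl

lemma MS_comm (q : ℂ) (hq : q ≠ 0) (g : PowerSeries ℂ) :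
    Mop (Sop q⁻¹ g) = q • Sop q⁻¹ (Mop g) := by
  ext n
  rw [Sop_apply, Sop_apply, Mop_apply, Mop_apply, PowerSeries.coeff_smul]
  cases n with
  | zero =>
    rw [PowerSeries.coeff_zero_X_mul, PowerSeries.coeff_rescale,
      PowerSeries.coeff_zero_X_mul]
    simp
  | succ n =>
    rw [PowerSeries.coeff_succ_X_mul, PowerSeries.coeff_rescale,
      PowerSeries.coeff_rescale, PowerSeries.coeff_succ_X_mul, pow_succ]
    field_simp
    ring_nf
    simp [hq]

lemma Hfact (q p Q1 Q2 Q3 : ℂ) (hq : q ≠ 0) :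
    ∀ f : PowerSeries ℂ,
      Htop q p Q1 Q2 Q3 f
        = (1 - (Q1 * Q2 * q ^ 2) • Sop q⁻¹) (Ktop q p Q1 Q2 Q3 f) := by
  intro f
  simp only [Htop, Ktop, Module.End.mul_apply, LinearMap.sub_apply, LinearMap.add_apply,
    LinearMap.smul_apply, Module.End.one_apply, map_add, map_sub, map_smul,
    MS_comm q hq]
  match_scalars <;> ring

lemma inj_lemma (q Q1 Q2 : ℂ) (hq : q ≠ 0)
    (hgen : ∀ n : ℤ, Q1 * Q2 ≠ q ^ n) (g : PowerSeries ℂ)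
    (h : (1 - (Q1 * Q2 * q ^ 2) • Sop q⁻¹) g = 0) : g = 0 := by
  ext n
  have h1 := congrArg (PowerSeries.coeff n) h
  simp only [LinearMap.sub_apply, LinearMap.smul_apply, Module.End.one_apply,
    map_sub, PowerSeries.coeff_smul, Sop_apply, PowerSeries.coeff_rescale,
    smul_eq_mul, map_zero] at h1
  have hne : 1 - Q1 * Q2 * q ^ 2 * (q⁻¹) ^ n ≠ 0 := by
    intro h0
    apply hgen ((n : ℤ) - 2)
    have : Q1 * Q2 * q ^ 2 * (q⁻¹) ^ n = 1 := by linear_combination -h0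
    have hz : Q1 * Q2 = q ^ (n : ℤ) * (q ^ (2:ℤ))⁻¹ := by
      rw [zpow_natCast, zpow_two]
      field_simp at this ⊢
      have hinv : (1 / q) ^ n * q ^ n = 1 := by
        rw [← mul_pow, one_div, inv_mul_cancel₀ hq, one_pow]
      linear_combination q ^ n * this - Q1 * Q2 * q ^ 2 * hinv
    rw [hz, ← zpow_neg, ← zpow_add₀ hq, sub_eq_add_neg]
  have : (1 - Q1 * Q2 * q ^ 2 * (q⁻¹) ^ n) * PowerSeries.coeff n g = 0 := by
    linear_combination h1
  rw [map_zero]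
  rcases mul_eq_zero.mp this with h' | h'
  · exact absurd h' hne
  · exact h'

/-- the Ψ̃-half of Theorem 4 of the paper: for generic values of
`Q1, Q2` (i.e. `Q1Q2 ≠ qⁿ` for every integer `n`), `H̃f = 0` iff `K̃f = 0`. -/
theorem closed_topological_vertex_Htilde_reduces_to_Ktilde
    (q p Q1 Q2 Q3 : ℂ) (hq : q ≠ 0) (hp : p ^ 2 = q)
    (hgen : ∀ n : ℤ, Q1 * Q2 ≠ q ^ n) :
    ∀ f : PowerSeries ℂ, Htop q p Q1 Q2 Q3 f = 0 ↔ Ktop q p Q1 Q2 Q3 f = 0 := by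
  intro f
  constructor
  · intro h
    apply inj_lemma q Q1 Q2 hq hgen
    rw [← Hfact q p Q1 Q2 Q3 hq f, h]
  · intro h
    rw [Hfact q p Q1 Q2 Q3 hq f, h, map_zero]
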